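/- Let g be the Lorentzian metric Lie algebra on pseudo-orthonormal basis u1,u2,u3,u4 (with ⟨u1,u2⟩=⟨u3,u3⟩=⟨u4,u4⟩=1) and brackets [u1,u4]=γ1 u1 + u2 − γ3 u3, [u2,u4]=−γ1 u2, [u3,u4]=γ3 u2 with γ1 ≠ 0. Then the left-invariant vector field determined by u2 is null and recurrent: ∇_{u1} u2 = ∇_{u2} u2 = ∇_{u3} u2 = 0 and ∇_{u4} u2 = γ1 u2, where ∇ is determined by the Koszul formula on the Lie algebra. -/
import Mathlib


noncomputable section

open Finset Polynomial

abbrev V : Type := Fin 4 → ℝ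

def e (i : Fin 4) : V := Pi.single i 1

/-- bilinear bracket determined by structure constants `c`. -/
def br (c : Fin 4 → Fin 4 → V) (x y : V) : V :=
  ∑ i : Fin 4, ∑ j : Fin 4, (x i * y j) • c i j

/-- bilinear form determined by the matrix `G`. -/
def gmet (G : Matrix (Fin 4) (Fin 4) ℝ) (x y : V) : ℝ :=
  ∑ i : Fin 4, ∑ j : Fin 4, x i * y j * G i j

/-- `D` satisfies the Koszul formula of the Levi-Civita connection. -/
def Koszul (G : Matrix (Fin 4) (Fin 4) ℝ) (c : Fin 4 → Fin 4 → V) (D : V → V → V) : Prop :=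
  ∀ x y z : V, 2 * gmet G (D x y) z =
    gmet G (br c x y) z - gmet G (br c y z) x + gmet G (br c z x) y

/-- curvature tensor `R(x,y)z`. -/
def Rcurv (c : Fin 4 → Fin 4 → V) (D : V → V → V) (x y z : V) : V :=
  D x (D y z) - D y (D x z) - D (br c x y) z

/-- Ricci tensor `ρ(x,y) = tr (z ↦ R(z,x)y)`. -/
def ricciT (c : Fin 4 → Fin 4 → V) (D : V → V → V) (x y : V) : ℝ :=
  ∑ i : Fin 4, Rcurv c D (e i) x y i

/-- scalar curvature: metric trace of the Ricci tensor (here `G` is its own inverse). -/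
def scalCurv (G : Matrix (Fin 4) (Fin 4) ℝ) (c : Fin 4 → Fin 4 → V) (D : V → V → V) : ℝ :=
  ∑ i : Fin 4, ∑ j : Fin 4, G i j * ricciT c D (e i) (e j)

/-- metric with ⟨u1,u2⟩=⟨u3,u3⟩=⟨u4,u4⟩=1. -/
def Gpp : Matrix (Fin 4) (Fin 4) ℝ := !![0,1,0,0; 1,0,0,0; 0,0,1,0; 0,0,0,1]

/-- metric with ⟨u1,u1⟩=⟨u2,u2⟩=⟨u3,u4⟩=1. -/
def Gdeg : Matrix (Fin 4) (Fin 4) ℝ := !![1,0,0,0; 0,1,0,0; 0,0,0,1; 0,0,1,0]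

/-- orthonormal metric with e4 timelike. -/
def Gort : Matrix (Fin 4) (Fin 4) ℝ := !![1,0,0,0; 0,1,0,0; 0,0,1,0; 0,0,0,-1]

def c0 (g1 g3 : ℝ) : Fin 4 → Fin 4 → V :=
  let b14 : V := ![g1, 1, -g3, 0]
  let b24 : V := ![0, -g1, 0, 0]
  let b34 : V := ![0, g3, 0, 0]
  ![![0, 0, 0, b14],
    ![0, 0, 0, b24],
    ![0, 0, 0, b34],
    ![-b14, -b24, -b34, 0]]

/-- u2 is null and recurrent. -/
theorem stmt7 (g1 g3 : ℝ) (hg1 : g1 ≠ 0) (D : V → V → V)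
    (hD : Koszul Gpp (c0 g1 g3) D) :
    gmet Gpp (e 1) (e 1) = 0 ∧
    D (e 0) (e 1) = 0 ∧ D (e 1) (e 1) = 0 ∧ D (e 2) (e 1) = 0 ∧
    D (e 3) (e 1) = g1 • e 1 := by
  
  have key : ∀ x : V, ∀ w : V,
      (∀ k : Fin 4, gmet Gpp (D x (e 1)) (e k) = gmet Gpp w (e k)) → D x (e 1) = w := by
    intro x w h
    have h0 := h 0; have h1 := h 1; have h2 := h 2; have h3 := h 3
    simp [gmet, Gpp, e, Pi.single, Fin.sum_univ_four, Function.update,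
      Matrix.vecHead, Matrix.vecTail] at h0 h1 h2 h3
    funext k; fin_cases k
    · exact h1
    · exact h0
    · exact h2
    · exact h3
  refine ⟨?_, ?_, ?_, ?_, ?_⟩
  · simp [gmet, Gpp, e, Pi.single, Fin.sum_univ_four]
  · refine key (e 0) 0 fun k => ?_
    have h := hD (e 0) (e 1) (e k)
    fin_cases k <;>
      simp [gmet, br, c0, e, Gpp, Pi.single, Fin.sum_univ_four, Function.update,
        Matrix.vecHead, Matrix.vecTail] at h ⊢ <;> linarith
  · refine key (e 1) 0 fun k => ?_
    have h := hD (e 1) (e 1) (e k)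
    fin_cases k <;>
      simp [gmet, br, c0, e, Gpp, Pi.single, Fin.sum_univ_four, Function.update,
        Matrix.vecHead, Matrix.vecTail] at h ⊢ <;> linarith
  · refine key (e 2) 0 fun k => ?_
    have h := hD (e 2) (e 1) (e k)
    fin_cases k <;>
      simp [gmet, br, c0, e, Gpp, Pi.single, Fin.sum_univ_four, Function.update,
        Matrix.vecHead, Matrix.vecTail] at h ⊢ <;> linarith
  · refine key (e 3) (g1 • e 1) fun k => ?_
    have h := hD (e 3) (e 1) (e k)
    fin_cases k <;>
      simp [gmet, br, c0, e, Gpp, Pi.single, Fin.sum_univ_four, Function.update,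
        Matrix.vecHead, Matrix.vecTail] at h ⊢ <;> linarith
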